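/- Let A be an n×n complex matrix, B an n×m complex matrix, C an m×n complex matrix, and D an m×m complex matrix, and suppose the (n+m)×(n+m) block matrix [[A, B], [C, D]] is unitary, i.e. [[Aᴴ, Cᴴ], [Bᴴ, Dᴴ]] · [[A, B], [C, D]] = I, and that the row relations also hold (the block matrix times its conjugate transpose equals I). Then for every z ∈ ℂ with |z| = 1 such that zI − A is invertible, the m×m matrix M(z) = C(zI − A)⁻¹B + D is unitary: M(z)ᴴM(z) = I. -/

import Mathlib

open Matrix

/-- **A transfer function with a unitary realization is inner.**
If the block matrix `[[A, B], [C, D]]` is unitary (both its conjugate transpose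
times itself and itself times its conjugate transpose equal the identity), then
for every `z` on the unit circle such that `zI − A` is invertible, the matrix
`M(z) = C (zI − A)⁻¹ B + D` is unitary: `M(z)ᴴ M(z) = I`. -/
theorem stmt8 {n m : ℕ} (A : Matrix (Fin n) (Fin n) ℂ)
    (B : Matrix (Fin n) (Fin m) ℂ) (C : Matrix (Fin m) (Fin n) ℂ)
    (D : Matrix (Fin m) (Fin m) ℂ)
    (hU1 : (Matrix.fromBlocks A B C D)ᴴ * Matrix.fromBlocks A B C D = 1)
    (hU2 : Matrix.fromBlocks A B C D * (Matrix.fromBlocks A B C D)ᴴ = 1) :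
    ∀ z : ℂ, ‖z‖ = 1 → IsUnit (z • (1 : Matrix (Fin n) (Fin n) ℂ) - A) →
      (C * (z • (1 : Matrix (Fin n) (Fin n) ℂ) - A)⁻¹ * B + D)ᴴ *
        (C * (z • (1 : Matrix (Fin n) (Fin n) ℂ) - A)⁻¹ * B + D) = 1 := by
  -- extract block relations from hU1
  rw [fromBlocks_conjTranspose, fromBlocks_multiply, ← fromBlocks_one] at hU1
  have h11 : Cᴴ * C = 1 - Aᴴ * A := by
    have := congrArg Matrix.toBlocks₁₁ hU1
    simp only [toBlocks_fromBlocks₁₁] at this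
    linear_combination (norm := abel) this
  have h12 : Cᴴ * D = -(Aᴴ * B) := by
    have := congrArg Matrix.toBlocks₁₂ hU1
    simp only [toBlocks_fromBlocks₁₂] at this
    linear_combination (norm := abel) this
  have h21 : Dᴴ * C = -(Bᴴ * A) := by
    have := congrArg Matrix.toBlocks₂₁ hU1
    simp only [toBlocks_fromBlocks₂₁] at this
    linear_combination (norm := abel) this
  have h22 : Dᴴ * D = 1 - Bᴴ * B := by
    have := congrArg Matrix.toBlocks₂₂ hU1
    simp only [toBlocks_fromBlocks₂₂] at this
    linear_combination (norm := abel) this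
  intro z hz hF
  set F : Matrix (Fin n) (Fin n) ℂ := z • (1 : Matrix (Fin n) (Fin n) ℂ) - A with hFdef
  have hns : Complex.normSq z = 1 := by
    rw [Complex.normSq_eq_norm_sq, hz]; norm_num
  have hzz : star z * z = 1 := by
    calc star z * z = (Complex.normSq z : ℂ) := by
          rw [mul_comm]; exact Complex.mul_conj z
      _ = 1 := by rw [hns]; norm_num
  have hzz2 : z * star z = 1 := by rw [mul_comm]; exact hzz
  -- invertibility facts
  have hdet : IsUnit F.det := (Matrix.isUnit_iff_isUnit_det F).mp hF
  have hFX : F * F⁻¹ = 1 := Matrix.mul_nonsing_inv F hdet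
  have hXF : F⁻¹ * F = 1 := Matrix.nonsing_inv_mul F hdet
  have hXc : (F⁻¹)ᴴ = (Fᴴ)⁻¹ := Matrix.conjTranspose_nonsing_inv F
  have hdetc : IsUnit Fᴴ.det := by
    rw [Matrix.det_conjTranspose]; exact hdet.star
  have hXcFc : (F⁻¹)ᴴ * Fᴴ = 1 := by rw [hXc]; exact Matrix.nonsing_inv_mul Fᴴ hdetc
  have hFcXc : Fᴴ * (F⁻¹)ᴴ = 1 := by rw [hXc]; exact Matrix.mul_nonsing_inv Fᴴ hdetc
  -- key identity: Fᴴ F + Fᴴ A + Aᴴ F = 1 - Aᴴ A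
  have hkey : Fᴴ * F + Fᴴ * A + Aᴴ * F = 1 - Aᴴ * A := by
    have hFc : Fᴴ = star z • (1 : Matrix (Fin n) (Fin n) ℂ) - Aᴴ := by
      simp [hFdef, Matrix.conjTranspose_smul]
    rw [hFc, hFdef]
    simp only [Matrix.sub_mul, Matrix.mul_sub, Matrix.smul_mul, Matrix.mul_smul,
      Matrix.one_mul, Matrix.mul_one, smul_add, smul_sub, smul_smul, hzz, hzz2, one_smul]
    abel
  set X : Matrix (Fin n) (Fin n) ℂ := F⁻¹ with hXdef
  have hmid : Xᴴ * (1 - Aᴴ * A) * X = 1 + A * X + Xᴴ * Aᴴ := by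
    rw [← hkey]
    calc Xᴴ * (Fᴴ * F + Fᴴ * A + Aᴴ * F) * X
        = (Xᴴ * Fᴴ) * (F * X) + (Xᴴ * Fᴴ) * (A * X) + (Xᴴ * Aᴴ) * (F * X) := by
          simp only [Matrix.mul_add, Matrix.add_mul, Matrix.mul_assoc]
      _ = 1 + A * X + Xᴴ * Aᴴ := by
          rw [hXcFc, hFX]
          simp
  -- final computation
  have expand : (C * X * B + D)ᴴ * (C * X * B + D)
      = Bᴴ * (Xᴴ * (Cᴴ * C) * X) * B + Bᴴ * Xᴴ * (Cᴴ * D) + (Dᴴ * C) * (X * B)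
        + Dᴴ * D := by
    simp only [Matrix.conjTranspose_add, Matrix.conjTranspose_mul,
      Matrix.add_mul, Matrix.mul_add, Matrix.mul_assoc]
    abel
  rw [expand, h11, h12, h21, h22, hmid]
  simp only [Matrix.mul_add, Matrix.add_mul, Matrix.mul_one, Matrix.one_mul,
    Matrix.mul_neg, Matrix.neg_mul, Matrix.mul_assoc]
  abel
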